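/- Let S be the value semigroup of an irreducible plane curve singularity with minimal generators β₀,…,β_g satisfying n_iβ_i < β_{i+1}. Then there are no two consecutive integers both belonging to S in the interval [0, β_g − 1]; i.e., if ℓ, ℓ+1 ∈ S and ℓ+1 ≤ β_g − 1, we get a contradiction. -/

import Mathlib

open Finset

open scoped Classical in
/-- Weight function of a subset `S ⊆ ℕ`:
`w0 S ℓ = #([0,ℓ) ∩ S) − #([0,ℓ) \ S)`. -/
noncomputable def w0 (S : Set ℕ) (l : ℕ) : ℤ :=
  (((Finset.range l).filter (fun k => k ∈ S)).card : ℤ) -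
    (((Finset.range l).filter (fun k => k ∉ S)).card : ℤ)

theorem no_consecutive_below_beta_g (S : Set ℕ) (h0 : 0 ∈ S)
    (hadd : ∀ a b, a ∈ S → b ∈ S → a + b ∈ S)
    (hfin : (Sᶜ : Set ℕ).Finite)
    (g : ℕ) (hg : 1 ≤ g) (β l : ℕ → ℕ)
    (hβpos : ∀ i, 0 < β i)
    (hβmono : ∀ i j, i < j → j ≤ g → β i < β j)
    (hgen : S = (AddSubmonoid.closure {n : ℕ | ∃ i ≤ g, β i = n} : AddSubmonoid ℕ))
    (hl0 : l 0 = β 0)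
    (hlrec : ∀ i, l (i + 1) = Nat.gcd (l i) (β (i + 1)))
    (hn : ∀ i, 1 ≤ i → i + 1 ≤ g → l (i - 1) * β i < l i * β (i + 1))
    (hl2 : 2 ≤ l (g - 1)) :
    ∀ ℓ : ℕ, ℓ ∈ S → ℓ + 1 ∈ S → ℓ + 1 ≤ β g - 1 → False := by
  intro ℓ hℓ hℓ1 hle
  have hld : ∀ i, l (i + 1) ∣ l i := fun i => (hlrec i) ▸ Nat.gcd_dvd_left _ _
  have hmono : ∀ j i, i ≤ j → l j ∣ l i := by
    intro j
    induction j with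
    | zero => intro i h; interval_cases i; exact dvd_rfl
    | succ n ih =>
      intro i h
      rcases Nat.lt_succ_iff_lt_or_eq.mp (Nat.lt_succ_of_le h) with h' | h'
      · exact (hld n).trans (ih i (Nat.lt_succ_iff.mp h'))
      · subst h'; exact dvd_rfl
  have hliβ : ∀ i, l i ∣ β i := by
    intro i
    cases i with
    | zero => exact hl0 ▸ dvd_rfl
    | succ n => exact (hlrec n) ▸ Nat.gcd_dvd_right _ _
  have hdiv : ∀ i, i < g → l (g - 1) ∣ β i := fun i hi =>
    (hmono (g - 1) i (Nat.le_sub_one_of_lt hi)).trans (hliβ i)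
  have key : ∀ m ∈ S, l (g - 1) ∣ m ∨ β g ≤ m := by
    intro m hm
    rw [hgen] at hm
    induction hm using AddSubmonoid.closure_induction with
    | mem n hn' =>
      obtain ⟨i, hi, rfl⟩ := hn'
      rcases lt_or_eq_of_le hi with h' | h'
      · exact Or.inl (hdiv i h')
      · subst h'; exact Or.inr le_rfl
    | zero => exact Or.inl (dvd_zero _)
    | add a b _ _ ha hb =>
      rcases ha with ha | ha
      · rcases hb with hb | hb
        · exact Or.inl (dvd_add ha hb)
        · exact Or.inr (le_trans hb (Nat.le_add_left _ _))
      · exact Or.inr (le_trans ha (Nat.le_add_right _ _))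
  have hβg : ℓ + 1 < β g := lt_of_le_of_lt hle (Nat.sub_lt (hβpos g) one_pos)
  have h1 := key ℓ hℓ
  have h2 := key (ℓ + 1) hℓ1
  rcases h1 with h1 | h1
  · rcases h2 with h2 | h2
    · have : l (g - 1) ∣ 1 := by
        have := Nat.dvd_sub h2 h1
        simpa using this
      have := Nat.le_of_dvd one_pos this
      omega
    · omega
  · omega
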